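/- Let X be a topological space and let P be a property of subsets of X such that: the empty set has P; whenever B ⊆ X has P, A ⊆ B, and A is closed in X, then A has P; and whenever A and B are closed subsets of X both having P, then A ∪ B has P, so that 𝓗_P(X) = {H ⊆ X : cl_X H has P} is an ideal in X. Suppose X = X₁ ∪ ⋯ ∪ Xₙ where each Xᵢ is a closed subspace of X which is connected modulo the ideal 𝓗_P(Xᵢ) = {H ⊆ Xᵢ : cl_{Xᵢ} H has P} in Xᵢ, and suppose A = X₁ ∩ ⋯ ∩ Xₙ is connected modulo the ideal 𝓗_P(A) = {H ⊆ A : cl_A H has P} in A and A does not have P. Then X is connected modulo 𝓗_P(X). -/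

import Mathlib

open Set Topology

/-- An ideal in a set `X`: a nonempty collection of subsets of `X`, downward closed
and closed under finite unions. -/
def IsSetIdeal {X : Type*} (H : Set (Set X)) : Prop :=
  H.Nonempty ∧ (∀ A B : Set X, A ⊆ B → B ∈ H → A ∈ H) ∧
    (∀ A B : Set X, A ∈ H → B ∈ H → A ∪ B ∈ H)

/-- A continuous map `f : X → [0,1]` is 2-valued modulo an ideal `H` if `f⁻¹(0) ∉ H`,
`f⁻¹(1) ∉ H`, and `X \ (f⁻¹(0) ∪ f⁻¹(1)) ∈ H`. -/
def TwoValuedMod {X : Type*} [TopologicalSpace X] (H : Set (Set X)) (f : X → ℝ) : Prop :=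
  Continuous f ∧ (∀ x, f x ∈ Set.Icc (0 : ℝ) 1) ∧
    f ⁻¹' {0} ∉ H ∧ f ⁻¹' {1} ∉ H ∧ (f ⁻¹' {0} ∪ f ⁻¹' {1})ᶜ ∈ H

/-- `X` is connected modulo the ideal `H` if there is no continuous `f : X → [0,1]`
that is 2-valued modulo `H`. -/
def ConnectedMod (X : Type*) [TopologicalSpace X] (H : Set (Set X)) : Prop :=
  ¬ ∃ f : X → ℝ, TwoValuedMod H f

/-- Let `P` be a property of subsets of `X` making `𝓗_P(X) = {H : P (cl_X H)}` an ideal.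
If `X = X₁ ∪ ⋯ ∪ Xₙ` with each `Xᵢ` closed and connected modulo `𝓗_P(Xᵢ)`, and
`A = X₁ ∩ ⋯ ∩ Xₙ` is connected modulo `𝓗_P(A)` and does not have `P`, then `X` is
connected modulo `𝓗_P(X)`. (For `S` a subset of a closed subspace `T`, `cl_T S` is
identified with its image in `X`.) -/
private lemma punion_finset {X : Type*} [TopologicalSpace X] (P : Set X → Prop)
    (hP0 : P ∅)
    (hPun : ∀ A B : Set X, IsClosed A → IsClosed B → P A → P B → P (A ∪ B))
    {ι : Type*} (s : Finset ι) (C : ι → Set X) (hC : ∀ i, IsClosed (C i))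
    (hPC : ∀ i, P (C i)) : P (⋃ i ∈ s, C i) := by
  classical
  induction s using Finset.induction_on with
  | empty => simpa using hP0
  | insert _ _ h ih =>
    rw [Finset.set_biUnion_insert]
    exact hPun _ _ (hC _) (isClosed_biUnion_finset fun i _ => hC i) (hPC _) ih

theorem connectedMod_property_of_finite_union {X : Type*} [TopologicalSpace X]
    (P : Set X → Prop)
    (hP0 : P ∅)
    (hPher : ∀ A B : Set X, A ⊆ B → IsClosed A → P B → P A)
    (hPun : ∀ A B : Set X, IsClosed A → IsClosed B → P A → P B → P (A ∪ B))
    (n : ℕ) (hn : 0 < n) (Xs : Fin n → Set X)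
    (hcl : ∀ i, IsClosed (Xs i))
    (hcover : ⋃ i, Xs i = Set.univ)
    (hconn : ∀ i, ConnectedMod ↥(Xs i)
      {S : Set ↥(Xs i) | P ((Subtype.val : ↥(Xs i) → X) '' closure S)})
    (hA : ConnectedMod ↥(⋂ i, Xs i)
      {S : Set ↥(⋂ i, Xs i) | P ((Subtype.val : ↥(⋂ i, Xs i) → X) '' closure S)})
    (hAnP : ¬ P (⋂ i, Xs i)) :
    ConnectedMod X {H : Set X | P (closure H)} := by
  rintro ⟨f, hfc, hfr, hf0, hf1, hfm⟩
  simp only [Set.mem_setOf_eq] at hf0 hf1 hfm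
  -- image of closures in closed subspaces
  have himg : ∀ i (s : Set X),
      (Subtype.val : ↥(Xs i) → X) '' closure (Subtype.val ⁻¹' s) = closure (Xs i ∩ s) := by
    intro i s
    rw [← (hcl i).isClosedEmbedding_subtypeVal.closure_image_eq,
      Subtype.image_preimage_coe]
  -- key dichotomy from connectedness of each Xᵢ
  have key : ∀ i, P (closure (Xs i ∩ f ⁻¹' {0})) ∨ P (closure (Xs i ∩ f ⁻¹' {1})) := by
    intro i
    by_contra h
    push_neg at h
    apply hconn i
    refine ⟨f ∘ Subtype.val, hfc.comp continuous_subtype_val, fun x => hfr _, ?_, ?_, ?_⟩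
    · show ¬ P _
      have : (f ∘ Subtype.val) ⁻¹' {0} = (Subtype.val : ↥(Xs i) → X) ⁻¹' (f ⁻¹' {0}) := rfl
      rw [this, himg]
      exact h.1
    · show ¬ P _
      have : (f ∘ Subtype.val) ⁻¹' {1} = (Subtype.val : ↥(Xs i) → X) ⁻¹' (f ⁻¹' {1}) := rfl
      rw [this, himg]
      exact h.2
    · show P _
      have heq : ((f ∘ Subtype.val) ⁻¹' {0} ∪ (f ∘ Subtype.val) ⁻¹' {1})ᶜ
          = (Subtype.val : ↥(Xs i) → X) ⁻¹' ((f ⁻¹' {0} ∪ f ⁻¹' {1})ᶜ) := rfl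
      rw [heq, himg]
      exact hPher _ _ (closure_mono inter_subset_right) isClosed_closure hfm
  -- if one side holds for all i, contradict hf0 / hf1
  have hall : ∀ (c : ℝ), (∀ i, P (closure (Xs i ∩ f ⁻¹' {c}))) → P (closure (f ⁻¹' {c})) := by
    intro c hc
    have hsub : closure (f ⁻¹' {c}) ⊆ ⋃ i ∈ Finset.univ, closure (Xs i ∩ f ⁻¹' {c}) := by
      apply closure_minimal
      · intro x hx
        have hxU : x ∈ ⋃ i, Xs i := by rw [hcover]; trivial
        obtain ⟨i, hi⟩ := Set.mem_iUnion.mp hxU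
        exact Set.mem_biUnion (Finset.mem_univ i) (subset_closure ⟨hi, hx⟩)
      · exact isClosed_biUnion_finset fun i _ => isClosed_closure
    exact hPher _ _ hsub isClosed_closure
      (punion_finset P hP0 hPun Finset.univ _ (fun i => isClosed_closure) hc)
  -- so there are i, j with the two failures
  have hex0 : ∃ i, ¬ P (closure (Xs i ∩ f ⁻¹' {0})) := by
    by_contra h; push_neg at h; exact hf0 (hall 0 h)
  have hex1 : ∃ j, ¬ P (closure (Xs j ∩ f ⁻¹' {1})) := by
    by_contra h; push_neg at h; exact hf1 (hall 1 h)
  obtain ⟨i, hi⟩ := hex0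
  obtain ⟨j, hj⟩ := hex1
  have hi1 : P (closure (Xs i ∩ f ⁻¹' {1})) := (key i).resolve_left hi
  have hj0 : P (closure (Xs j ∩ f ⁻¹' {0})) := (key j).resolve_right hj
  -- A is covered by three closed P-sets, contradicting ¬P A
  apply hAnP
  have hsub : (⋂ k, Xs k) ⊆
      closure (Xs j ∩ f ⁻¹' {0}) ∪ (closure (Xs i ∩ f ⁻¹' {1}) ∪
        closure ((f ⁻¹' {0} ∪ f ⁻¹' {1})ᶜ)) := by
    intro x hx
    by_cases h0 : f x = 0
    · exact Or.inl (subset_closure ⟨Set.mem_iInter.mp hx j, h0⟩)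
    by_cases h1 : f x = 1
    · exact Or.inr (Or.inl (subset_closure ⟨Set.mem_iInter.mp hx i, h1⟩))
    · exact Or.inr (Or.inr (subset_closure (by simp [h0, h1])))
  exact hPher _ _ hsub (isClosed_iInter fun k => hcl k)
    (hPun _ _ isClosed_closure (IsClosed.union isClosed_closure isClosed_closure) hj0
      (hPun _ _ isClosed_closure isClosed_closure hi1 hfm))
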